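/- Let p_1, ..., p_n be distinct prime numbers. The diagonal embedding of Q into the product R × Q_{p_1} × ... × Q_{p_n} has dense image (where each Q_{p_i} carries the p_i-adic topology and the product carries the product topology). -/

import Mathlib

open Filter Topology

private lemma padic_norm_nat_one {P : ℕ} [Fact P.Prime] {a : ℕ} (h : ¬ P ∣ a) :
    ‖(a : ℚ_[P])‖ = 1 := by
  have hc : ((a : ℤ) : ℚ_[P]) = (a : ℚ_[P]) := by push_cast; ring
  refine le_antisymm (hc ▸ Padic.norm_int_le_one (a : ℤ)) (not_lt.1 ?_)
  rw [← hc, Padic.norm_intCast_lt_one_iff]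
  exact_mod_cast h

theorem weak_approximation_rat
    {n : ℕ} (p : Fin n → ℕ) [∀ i, Fact (p i).Prime]
    (hinj : Function.Injective p) :
    DenseRange (fun q : ℚ =>
      (((q : ℝ), fun i => (q : ℚ_[p i])) : ℝ × ∀ i, ℚ_[p i])) := by
  set f : ℚ → ℝ × ∀ i, ℚ_[p i] := fun q => ((q : ℝ), fun i => (q : ℚ_[p i])) with hf
  have hp2 : ∀ j, 2 ≤ p j := fun j => (Fact.out : (p j).Prime).two_le
  have hpprime : ∀ j, (p j).Prime := fun j => Fact.out
  let φ : ℚ →+* ℝ × ∀ i, ℚ_[p i] :=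
    RingHom.prod (Rat.castHom ℝ) (Pi.ringHom fun i => Rat.castHom ℚ_[p i])
  let T : Subring (ℝ × ∀ i, ℚ_[p i]) := φ.range.topologicalClosure
  have hTclosed : IsClosed (T : Set (ℝ × ∀ i, ℚ_[p i])) :=
    Subring.isClosed_topologicalClosure _
  have hmem : ∀ q : ℚ, f q ∈ T := fun q =>
    Subring.le_topologicalClosure _ ⟨q, rfl⟩
  have closed_lim : ∀ (g : ℕ → ℝ × ∀ i, ℚ_[p i]) (z : ℝ × ∀ i, ℚ_[p i]),
      (∀ k, g k ∈ T) → Tendsto g atTop (𝓝 z) → z ∈ T := fun g z hg h =>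
    hTclosed.mem_of_tendsto h (Eventually.of_forall hg)
  -- the p-adic idempotents
  have hE : ∀ i : Fin n, ((0 : ℝ), Pi.single i (1 : ℚ_[p i])) ∈ T := by
    intro i
    set A : ℕ := ∏ j ∈ Finset.univ.erase i, p j with hA
    have hApos : 0 < A := Finset.prod_pos fun j _ => (hpprime j).pos
    have hnotdvd : ∀ j : Fin n, j ≠ i → ¬ p i ∣ p j := by
      intro j hj hdvd
      exact hj (hinj ((Nat.prime_dvd_prime_iff_eq (hpprime i) (hpprime j)).1 hdvd).symm)
    have hAco : ¬ p i ∣ A := by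
      intro hdvd
      obtain ⟨j, hjmem, hjd⟩ := (Nat.Prime.prime (hpprime i)).exists_mem_finset_dvd hdvd
      exact hnotdvd j (Finset.ne_of_mem_erase hjmem) hjd
    set r : ℚ := (A : ℚ) / (p i : ℚ) ^ (A + 1) with hr
    have hppos : (0 : ℚ) < (p i : ℚ) := by exact_mod_cast (hpprime i).pos
    have hrpos : 0 < r := div_pos (by exact_mod_cast hApos) (by positivity)
    have hrlt : r < 1 := by
      rw [div_lt_one (by positivity)]
      have h1 : A < 2 ^ (A + 1) := A.lt_two_pow_self.trans_le (Nat.pow_le_pow_right (by norm_num) (Nat.le_succ A))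
      have h2 : (2:ℕ) ^ (A+1) ≤ (p i) ^ (A+1) := Nat.pow_le_pow_left (hp2 i) _
      exact_mod_cast h1.trans_le h2
    have hr0 : r ≠ 0 := ne_of_gt hrpos
    set q : ℕ → ℚ := fun k => r ^ k / (1 + r ^ k) with hq
    -- real coordinate tends to 0
    have hreal : Tendsto (fun k => ((q k : ℚ) : ℝ)) atTop (𝓝 0) := by
      have hpow : Tendsto (fun k => ((r : ℝ)) ^ k) atTop (𝓝 0) :=
        tendsto_pow_atTop_nhds_zero_of_abs_lt_one
          (by rw [abs_of_pos (by exact_mod_cast hrpos)]; exact_mod_cast hrlt)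
      have := hpow.div ((tendsto_const_nhds : Filter.Tendsto _ atTop (𝓝 (1:ℝ))).add hpow)
        (by norm_num)
      simp only [add_zero, zero_div] at this
      convert this using 2 with k
      simp only [Pi.div_apply]
      push_cast [hq]
      ring
    -- coordinate i tends to 1
    have hi : Tendsto (fun k => ((q k : ℚ) : ℚ_[p i])) atTop (𝓝 1) := by
      have hnormA : ‖((A : ℚ) : ℚ_[p i])‖ = 1 := by
        rw [show ((A:ℚ) : ℚ_[p i]) = ((A:ℕ) : ℚ_[p i]) by push_cast; ring]
        exact padic_norm_nat_one hAco
      have hru : ‖((r⁻¹ : ℚ) : ℚ_[p i])‖ < 1 := by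
        have hrinv : (r⁻¹ : ℚ) = ((p i : ℚ)) ^ (A+1) / (A : ℚ) := by rw [hr, inv_div]
        have hcast : ((r⁻¹ : ℚ) : ℚ_[p i]) = ((p i : ℚ_[p i]) ^ (A+1)) / ((A:ℕ) : ℚ_[p i]) := by
          rw [hrinv]; push_cast; ring
        rw [hcast, norm_div, norm_pow, Padic.norm_p]
        rw [show (((A:ℕ)) : ℚ_[p i]) = ((A : ℚ) : ℚ_[p i]) by push_cast; ring, hnormA]
        have h2 : (2:ℝ) ≤ (p i : ℝ) := by exact_mod_cast hp2 i
        have hlt : ((p i : ℝ))⁻¹ < 1 := by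
          rw [inv_lt_one_iff₀]; right; linarith
        have := pow_lt_one₀ (by positivity : (0:ℝ) ≤ ((p i : ℝ))⁻¹) hlt (Nat.succ_ne_zero A)
        simpa using this
      have hpow : Tendsto (fun k => ((r⁻¹ : ℚ) : ℚ_[p i]) ^ k) atTop (𝓝 0) :=
        tendsto_pow_atTop_nhds_zero_of_norm_lt_one hru
      have hq' : ∀ k, (q k : ℚ) = 1 / ((r⁻¹) ^ k + 1) := by
        intro k
        have h1 : (0:ℚ) < 1 + r ^ k := by positivity
        have h2 : (0:ℚ) < (r⁻¹) ^ k + 1 := by positivity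
        rw [hq]
        rw [div_eq_div_iff (ne_of_gt h1) (ne_of_gt h2)]
        rw [mul_add, ← mul_pow, mul_inv_cancel₀ hr0]
        ring
      have := (tendsto_const_nhds : Filter.Tendsto _ atTop (𝓝 (1 : ℚ_[p i]))).div
        (hpow.add (tendsto_const_nhds : Filter.Tendsto _ atTop (𝓝 (1 : ℚ_[p i])))) (by norm_num)
      simp only [zero_add, div_one] at this
      convert this using 2 with k
      simp only [Pi.div_apply]
      rw [hq' k]
      push_cast
      ring
    -- coordinates j ≠ i tend to 0
    have hj : ∀ j : Fin n, j ≠ i → Tendsto (fun k => ((q k : ℚ) : ℚ_[p j])) atTop (𝓝 0) := by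
      intro j hji
      have hdvd : p j ∣ A := Finset.dvd_prod_of_mem _ (Finset.mem_erase.2 ⟨hji, Finset.mem_univ j⟩)
      have hnormA : ‖((A : ℚ) : ℚ_[p j])‖ < 1 := by
        rw [show ((A:ℚ) : ℚ_[p j]) = (((A:ℕ):ℤ) : ℚ_[p j]) by push_cast; ring]
        rw [Padic.norm_intCast_lt_one_iff]
        exact_mod_cast hdvd
      have hnormp : ‖((p i : ℕ) : ℚ_[p j])‖ = 1 := by
        apply padic_norm_nat_one
        intro hdvd'
        exact hji (hinj ((Nat.prime_dvd_prime_iff_eq (hpprime j) (hpprime i)).1 hdvd'))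
      have hrn : ‖((r : ℚ) : ℚ_[p j])‖ < 1 := by
        have : ((r : ℚ) : ℚ_[p j]) = (((A:ℚ)) : ℚ_[p j]) / (((p i : ℕ) : ℚ_[p j])) ^ (A+1) := by
          rw [hr]; push_cast; ring
        rw [this, norm_div, norm_pow, hnormp]
        simpa using hnormA
      have hpow : Tendsto (fun k => ((r : ℚ) : ℚ_[p j]) ^ k) atTop (𝓝 0) :=
        tendsto_pow_atTop_nhds_zero_of_norm_lt_one hrn
      have := hpow.div ((tendsto_const_nhds : Filter.Tendsto _ atTop (𝓝 (1:ℚ_[p j]))).add hpow)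
        (by norm_num)
      simp only [add_zero, zero_div] at this
      convert this using 2 with k
      simp only [Pi.div_apply]
      rw [hq]
      push_cast
      ring
    refine closed_lim (fun k => f (q k)) _ (fun k => hmem (q k)) ?_
    refine Tendsto.prodMk_nhds hreal ?_
    rw [tendsto_pi_nhds]
    intro j
    by_cases hji : j = i
    · subst hji
      simpa [Pi.single_eq_same] using hi
    · simpa [Pi.single_eq_of_ne hji] using hj j hji
  -- (0, 1) ∈ T
  have hOne : ((0 : ℝ), (1 : ∀ i, ℚ_[p i])) ∈ T := by
    have := Subring.sum_mem T (fun i (_ : i ∈ Finset.univ) => hE i)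
    convert this using 1
    rw [Prod.ext_iff]
    constructor
    · simp [Prod.fst_sum]
    · simp only [Prod.snd_sum]
      exact (Finset.univ_sum_single (1 : ∀ i, ℚ_[p i])).symm
  -- (1, 0) ∈ T
  have hEr : ((1 : ℝ), (0 : ∀ i, ℚ_[p i])) ∈ T := by
    have := Subring.sub_mem T T.one_mem hOne
    convert this using 1
    rw [Prod.ext_iff]
    constructor <;> simp
  -- every (x, 0) ∈ T
  have hX : ∀ x : ℝ, ((x : ℝ), (0 : ∀ i, ℚ_[p i])) ∈ T := by
    intro x
    have hseq : ∀ k : ℕ, ∃ g : ℚ, |x - (g:ℝ)| < 1 / (k + 1) :=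
      fun k => exists_rat_near x (show (0:ℝ) < 1 / (k+1) by positivity)
    choose g hg using hseq
    have hgt : Tendsto (fun k => ((g k : ℚ) : ℝ)) atTop (𝓝 x) := by
      rw [tendsto_iff_dist_tendsto_zero]
      refine squeeze_zero (fun k => dist_nonneg) (fun k => ?_)
        tendsto_one_div_add_atTop_nhds_zero_nat
      rw [Real.dist_eq, abs_sub_comm]
      exact le_of_lt (hg k)
    refine closed_lim (fun k => f (g k) * ((1 : ℝ), (0 : ∀ i, ℚ_[p i]))) _
      (fun k => T.mul_mem (hmem (g k)) hEr) ?_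
    have heq : ∀ k, f (g k) * ((1 : ℝ), (0 : ∀ i, ℚ_[p i]))
        = (((g k : ℚ) : ℝ), (0 : ∀ i, ℚ_[p i])) := by
      intro k
      rw [Prod.ext_iff]
      constructor <;> simp [hf]
    simp only [heq]
    exact hgt.prodMk_nhds tendsto_const_nhds
  -- every (0, single i a) ∈ T
  have hP : ∀ (i : Fin n) (a : ℚ_[p i]), ((0 : ℝ), Pi.single i a) ∈ T := by
    intro i a
    have hseq : ∀ k : ℕ, ∃ g : ℚ, ‖a - (g : ℚ_[p i])‖ < 1 / (k + 1) :=
      fun k => Padic.rat_dense (p := p i) a (show (0:ℝ) < 1 / (k+1) by positivity)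
    choose g hg using hseq
    have hgt : Tendsto (fun k => ((g k : ℚ) : ℚ_[p i])) atTop (𝓝 a) := by
      rw [tendsto_iff_dist_tendsto_zero]
      refine squeeze_zero (fun k => dist_nonneg) (fun k => ?_)
        tendsto_one_div_add_atTop_nhds_zero_nat
      rw [dist_eq_norm, norm_sub_rev]
      exact le_of_lt (hg k)
    refine closed_lim (fun k => f (g k) * ((0 : ℝ), Pi.single i (1 : ℚ_[p i]))) _
      (fun k => T.mul_mem (hmem (g k)) (hE i)) ?_
    have heq : ∀ k, f (g k) * ((0 : ℝ), Pi.single i (1 : ℚ_[p i]))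
        = ((0 : ℝ), Pi.single i ((g k : ℚ) : ℚ_[p i])) := by
      intro k
      rw [Prod.ext_iff]
      refine ⟨by simp [hf], funext fun j => ?_⟩
      by_cases hji : j = i
      · subst hji; simp [hf, Pi.single_eq_same]
      · simp [hf, Pi.single_eq_of_ne hji]
    simp only [heq]
    refine tendsto_const_nhds.prodMk_nhds ?_
    rw [tendsto_pi_nhds]
    intro j
    by_cases hji : j = i
    · subst hji; simpa [Pi.single_eq_same] using hgt
    · simp only [Pi.single_eq_of_ne hji]
      exact tendsto_const_nhds
  -- conclude
  have hT : ∀ z : ℝ × ∀ i, ℚ_[p i], z ∈ T := by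
    intro ⟨x, a⟩
    have := T.add_mem (hX x) (Subring.sum_mem T (fun i (_ : i ∈ Finset.univ) => hP i (a i)))
    convert this using 1
    rw [Prod.ext_iff]
    constructor
    · simp [Prod.fst_sum]
    · simp only [Prod.snd_add, Prod.snd_sum]
      rw [Finset.univ_sum_single a]
      simp
  rw [DenseRange, dense_iff_closure_eq]
  have hrange : Set.range f = (φ.range : Set (ℝ × ∀ i, ℚ_[p i])) := by
    ext z
    constructor
    · rintro ⟨q, rfl⟩; exact ⟨q, rfl⟩
    · rintro ⟨q, rfl⟩; exact ⟨q, rfl⟩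
  rw [hrange]
  refine Set.eq_univ_of_forall fun z => ?_
  exact hT z
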